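/- For each positive integer $t$ and each integer $n$ with $t+1 \mid n-1$, there exists a bipartite graph $G = (A \dot\cup B, E)$ with $|A| = |B| = n$ and minimum degree $\delta(G) = (n-1)/(t+1) \ge n/(t+1) - 1$ that has no $t$-shallow hitting edge set. Concretely: split $A = A_1 \dot\cup A_2$ and $B = B_1 \dot\cup B_2$ with $|A_1| = |B_2| = (n-1)/(t+1)$ and $|A_2| = |B_1| = (nt+1)/(t+1)$, and join each vertex of $A_1$ to each vertex of $B_1$ and each vertex of $A_2$ to each vertex of $B_2$; then $t|N(B_1)| = t|A_1| < |B_1|$, so no $t$-shallow hitting edge set exists. -/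

import Mathlib

open Finset

/-- The tight example for bipartite graphs: for `t ≥ 1` and `(t+1) ∣ (n-1)`, the bipartite
graph on `Fin n ⊕ Fin n` joining `A₁` (the first `m := (n-1)/(t+1)` left vertices) completely
to `B₁` (the first `n - m` right vertices) and `A₂` to `B₂`, has minimum degree
`m = (n-1)/(t+1) ≥ n/(t+1) - 1` but no `t`-shallow hitting edge set. -/
theorem bipartite_min_degree_tight_example (t n : ℕ) (ht : 1 ≤ t) (hn : 1 ≤ n)
    (hdvd : (t+1) ∣ (n-1)) :
    let m := (n-1)/(t+1)
    let E : Finset (Finset (Fin n ⊕ Fin n)) :=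
      ((Finset.univ : Finset (Fin n × Fin n)).filter (fun p =>
          (p.1.val < m ∧ p.2.val < n - m) ∨ (m ≤ p.1.val ∧ n - m ≤ p.2.val))).image
        (fun p => {Sum.inl p.1, Sum.inr p.2})
    -- minimum degree is m = (n-1)/(t+1) ≥ n/(t+1) - 1
    ((n : ℚ)/(t+1) - 1 ≤ (m : ℚ)) ∧
    (∀ v : Fin n ⊕ Fin n, m ≤ (E.filter fun e => v ∈ e).card) ∧
    (∃ v : Fin n ⊕ Fin n, (E.filter fun e => v ∈ e).card = m) ∧
    -- no t-shallow hitting edge set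
    ¬ ∃ M ⊆ E, ∀ v : Fin n ⊕ Fin n,
        1 ≤ (M.filter fun e => v ∈ e).card ∧ (M.filter fun e => v ∈ e).card ≤ t := by
  intro m E
  obtain ⟨c, hc⟩ := hdvd
  have hm : m = c := by
    show (n-1)/(t+1) = c
    rw [hc, Nat.mul_div_cancel_left _ (by omega)]
  have hn1 : n = (t+1)*m + 1 := by rw [hm, ← hc]; omega
  have hnm : n - m = t*m + 1 := by
    have h : (t+1)*m = t*m + m := by ring
    omega
  have htm : m ≤ t*m := Nat.le_mul_of_pos_left m ht
  have hmn : m < n := by omega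
  -- injectivity of the edge map
  have hfinj : Function.Injective
      (fun p : Fin n × Fin n => ({Sum.inl p.1, Sum.inr p.2} : Finset (Fin n ⊕ Fin n))) := by
    intro p q h
    simp only [Finset.ext_iff] at h
    have h1 := (h (Sum.inl p.1)).mp (by simp)
    have h2 := (h (Sum.inr p.2)).mp (by simp)
    simp only [mem_insert, mem_singleton, Sum.inl.injEq, Sum.inr.injEq, reduceCtorEq,
      or_false, false_or] at h1 h2
    exact Prod.ext h1 h2
  -- counting lemmas on Fin n
  have cardlt : ∀ k : ℕ, k ≤ n → ((univ : Finset (Fin n)).filter fun b => b.val < k).card = k := by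
    intro k hk
    have himg : ((univ : Finset (Fin n)).filter fun b => b.val < k).image Fin.val
        = Finset.range k := by
      ext i
      simp only [mem_image, mem_filter, mem_univ, true_and, Finset.mem_range]
      constructor
      · rintro ⟨b, hb, rfl⟩; exact hb
      · intro hi; exact ⟨⟨i, lt_of_lt_of_le hi hk⟩, hi, rfl⟩
    rw [← Finset.card_image_of_injective _ Fin.val_injective, himg, Finset.card_range]
  have cardge : ∀ k : ℕ, k ≤ n →
      ((univ : Finset (Fin n)).filter fun b => k ≤ b.val).card = n - k := by
    intro k hk
    have h := Finset.card_filter_add_card_filter_not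
      (s := (univ : Finset (Fin n))) (p := fun b : Fin n => b.val < k)
    simp only [not_lt, Finset.card_univ, Fintype.card_fin] at h
    have := cardlt k hk
    omega
  -- the filtered edge set around a vertex
  have hdegE : ∀ v : Fin n ⊕ Fin n, (E.filter fun e => v ∈ e) =
      ((univ : Finset (Fin n × Fin n)).filter fun p =>
        ((p.1.val < m ∧ p.2.val < n - m) ∨ (m ≤ p.1.val ∧ n - m ≤ p.2.val)) ∧
          v ∈ ({Sum.inl p.1, Sum.inr p.2} : Finset (Fin n ⊕ Fin n))).image
        (fun p => {Sum.inl p.1, Sum.inr p.2}) := by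
    intro v
    ext e
    simp only [E, mem_filter, mem_image, mem_univ, true_and]
    constructor
    · rintro ⟨⟨p, hp, rfl⟩, hv⟩; exact ⟨p, ⟨hp, hv⟩, rfl⟩
    · rintro ⟨p, ⟨hp, hv⟩, rfl⟩; exact ⟨⟨p, hp, rfl⟩, hv⟩
  -- degree of left vertices
  have degL : ∀ a : Fin n, (E.filter fun e => Sum.inl a ∈ e).card
      = if a.val < m then n - m else m := by
    intro a
    rw [hdegE, Finset.card_image_of_injective _ hfinj]
    have hset : ((univ : Finset (Fin n × Fin n)).filter fun p =>
        ((p.1.val < m ∧ p.2.val < n - m) ∨ (m ≤ p.1.val ∧ n - m ≤ p.2.val)) ∧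
          Sum.inl a ∈ ({Sum.inl p.1, Sum.inr p.2} : Finset (Fin n ⊕ Fin n)))
        = {a} ×ˢ ((univ : Finset (Fin n)).filter fun b =>
            (a.val < m ∧ b.val < n - m) ∨ (m ≤ a.val ∧ n - m ≤ b.val)) := by
      ext ⟨x, y⟩
      simp only [mem_filter, mem_univ, true_and, Finset.mem_product, Finset.mem_singleton,
        mem_insert, mem_singleton, Sum.inl.injEq, reduceCtorEq, or_false]
      constructor
      · rintro ⟨hcond, rfl⟩; exact ⟨rfl, hcond⟩
      · rintro ⟨rfl, hcond⟩; exact ⟨hcond, rfl⟩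
    rw [hset, Finset.card_product, Finset.card_singleton, one_mul]
    by_cases ha : a.val < m
    · rw [if_pos ha]
      have heq : ((univ : Finset (Fin n)).filter fun b =>
          (a.val < m ∧ b.val < n - m) ∨ (m ≤ a.val ∧ n - m ≤ b.val))
          = (univ : Finset (Fin n)).filter fun b => b.val < n - m := by
        apply Finset.filter_congr; intro b _; constructor <;> intro h <;> omega
      rw [heq, cardlt (n - m) (by omega)]
    · rw [if_neg ha]
      have heq : ((univ : Finset (Fin n)).filter fun b =>
          (a.val < m ∧ b.val < n - m) ∨ (m ≤ a.val ∧ n - m ≤ b.val))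
          = (univ : Finset (Fin n)).filter fun b => n - m ≤ b.val := by
        apply Finset.filter_congr; intro b _; constructor <;> intro h <;> omega
      rw [heq, cardge (n - m) (by omega)]
      omega
  -- degree of right vertices
  have degR : ∀ b : Fin n, (E.filter fun e => Sum.inr b ∈ e).card
      = if b.val < n - m then m else n - m := by
    intro b
    rw [hdegE, Finset.card_image_of_injective _ hfinj]
    have hset : ((univ : Finset (Fin n × Fin n)).filter fun p =>
        ((p.1.val < m ∧ p.2.val < n - m) ∨ (m ≤ p.1.val ∧ n - m ≤ p.2.val)) ∧
          Sum.inr b ∈ ({Sum.inl p.1, Sum.inr p.2} : Finset (Fin n ⊕ Fin n)))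
        = ((univ : Finset (Fin n)).filter fun a =>
            (a.val < m ∧ b.val < n - m) ∨ (m ≤ a.val ∧ n - m ≤ b.val)) ×ˢ {b} := by
      ext ⟨x, y⟩
      simp only [mem_filter, mem_univ, true_and, Finset.mem_product, Finset.mem_singleton,
        mem_insert, mem_singleton, Sum.inr.injEq, reduceCtorEq, false_or]
      constructor
      · rintro ⟨hcond, rfl⟩; exact ⟨hcond, rfl⟩
      · rintro ⟨hcond, rfl⟩; exact ⟨hcond, rfl⟩
    rw [hset, Finset.card_product, Finset.card_singleton, mul_one]
    by_cases hb : b.val < n - m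
    · rw [if_pos hb]
      have heq : ((univ : Finset (Fin n)).filter fun a =>
          (a.val < m ∧ b.val < n - m) ∨ (m ≤ a.val ∧ n - m ≤ b.val))
          = (univ : Finset (Fin n)).filter fun a => a.val < m := by
        apply Finset.filter_congr; intro a _; constructor <;> intro h <;> omega
      rw [heq, cardlt m (by omega)]
    · rw [if_neg hb]
      have heq : ((univ : Finset (Fin n)).filter fun a =>
          (a.val < m ∧ b.val < n - m) ∨ (m ≤ a.val ∧ n - m ≤ b.val))
          = (univ : Finset (Fin n)).filter fun a => m ≤ a.val := by
        apply Finset.filter_congr; intro a _; constructor <;> intro h <;> omega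
      rw [heq, cardge m (by omega)]
  refine ⟨?_, ?_, ?_, ?_⟩
  · -- rational inequality
    rw [sub_le_iff_le_add, div_le_iff₀ (by positivity : (0:ℚ) < (t:ℚ) + 1)]
    have : (n : ℚ) = ((t:ℚ)+1) * (m:ℚ) + 1 := by
      rw [hn1]; push_cast; ring
    rw [this]
    nlinarith [Nat.cast_nonneg (α := ℚ) t, Nat.cast_nonneg (α := ℚ) m]
  · -- min degree
    intro v
    rcases v with a | b
    · rw [degL]; split_ifs <;> omega
    · rw [degR]; split_ifs <;> omega
  · -- vertex of degree exactly m
    refine ⟨Sum.inr ⟨0, by omega⟩, ?_⟩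
    rw [degR]
    rw [if_pos]
    show (0 : ℕ) < n - m
    omega
  · -- no t-shallow hitting edge set
    rintro ⟨M, hME, hdeg⟩
    set P := (univ : Finset (Fin n × Fin n)).filter
      (fun p => ({Sum.inl p.1, Sum.inr p.2} : Finset (Fin n ⊕ Fin n)) ∈ M) with hP
    have hMP : M = P.image (fun p => {Sum.inl p.1, Sum.inr p.2}) := by
      ext e; constructor
      · intro he
        have heE := hME he
        simp only [E, mem_image, mem_filter, mem_univ, true_and] at heE
        obtain ⟨p, hp, rfl⟩ := heE
        exact mem_image_of_mem _ (by simp [hP, he])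
      · intro he
        simp only [mem_image, hP, mem_filter, mem_univ, true_and] at he
        obtain ⟨p, hp, rfl⟩ := he; exact hp
    have hPcond : ∀ p ∈ P, (p.1.val < m ∧ p.2.val < n - m) ∨ (m ≤ p.1.val ∧ n - m ≤ p.2.val) := by
      intro p hp
      simp only [hP, mem_filter, mem_univ, true_and] at hp
      have hE' := hME hp
      simp only [E, mem_image, mem_filter, mem_univ, true_and] at hE'
      obtain ⟨q, hq, hfq⟩ := hE'
      have hqp : q = p := hfinj hfq
      rwa [hqp] at hq
    have hfilter : ∀ v : Fin n ⊕ Fin n, (M.filter fun e => v ∈ e).card =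
        (P.filter fun p => v ∈ ({Sum.inl p.1, Sum.inr p.2} : Finset (Fin n ⊕ Fin n))).card := by
      intro v
      rw [hMP, Finset.filter_image, Finset.card_image_of_injective _ hfinj]
    -- lower bound on pairs with right endpoint in B₁
    have key1 : n - m ≤ (P.filter fun p => p.2.val < n - m).card := by
      have hfib := Finset.card_eq_sum_card_fiberwise
        (s := P.filter fun p => p.2.val < n - m)
        (t := (univ : Finset (Fin n)).filter fun b => b.val < n - m) (f := Prod.snd)
        (by intro p hp; simp only [mem_coe, mem_filter, mem_univ, true_and] at hp ⊢; exact hp.2)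
      calc n - m = ∑ _b ∈ ((univ : Finset (Fin n)).filter fun b => b.val < n - m), 1 := by
            rw [Finset.sum_const, smul_eq_mul, mul_one, cardlt _ (by omega)]
        _ ≤ ∑ b ∈ ((univ : Finset (Fin n)).filter fun b => b.val < n - m),
              ((P.filter fun p => p.2.val < n - m).filter fun p => p.2 = b).card := by
            apply Finset.sum_le_sum
            intro b hb
            simp only [mem_filter, mem_univ, true_and] at hb
            have h1 := (hdeg (Sum.inr b)).1
            rw [hfilter] at h1
            refine le_trans h1 (Finset.card_le_card ?_)
            intro p hp
            simp only [mem_filter, mem_insert, mem_singleton, Sum.inr.injEq, reduceCtorEq,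
              false_or] at hp
            obtain ⟨hpP, hpb⟩ := hp
            simp only [mem_filter]
            exact ⟨⟨hpP, by rw [← hpb]; exact hb⟩, hpb.symm⟩
        _ = (P.filter fun p => p.2.val < n - m).card := hfib.symm
    have key2 : (P.filter fun p => p.2.val < n - m).card ≤ (P.filter fun p => p.1.val < m).card := by
      apply Finset.card_le_card
      intro p hp
      simp only [mem_filter] at hp ⊢
      have := hPcond p hp.1
      exact ⟨hp.1, by omega⟩
    have key3 : (P.filter fun p => p.1.val < m).card ≤ m * t := by
      have hfib := Finset.card_eq_sum_card_fiberwise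
        (s := P.filter fun p => p.1.val < m)
        (t := (univ : Finset (Fin n)).filter fun a => a.val < m) (f := Prod.fst)
        (by intro p hp; simp only [mem_coe, mem_filter, mem_univ, true_and] at hp ⊢; exact hp.2)
      rw [hfib]
      calc ∑ a ∈ ((univ : Finset (Fin n)).filter fun a => a.val < m),
            ((P.filter fun p => p.1.val < m).filter fun p => p.1 = a).card
          ≤ ∑ _a ∈ ((univ : Finset (Fin n)).filter fun a => a.val < m), t := by
            apply Finset.sum_le_sum
            intro a ha
            simp only [mem_filter, mem_univ, true_and] at ha
            have h2 := (hdeg (Sum.inl a)).2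
            rw [hfilter] at h2
            refine le_trans (Finset.card_le_card ?_) h2
            intro p hp
            simp only [mem_filter] at hp
            obtain ⟨⟨hpP, _⟩, hpa⟩ := hp
            simp only [mem_filter, mem_insert, mem_singleton]
            exact ⟨hpP, Or.inl (by rw [hpa])⟩
        _ = m * t := by rw [Finset.sum_const, smul_eq_mul, cardlt _ (by omega)]
    have hfin := key1.trans (key2.trans key3)
    have hcomm : m * t = t * m := mul_comm m t
    omega
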